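/- Let ρ belong to the class V_bC_g* and define L_ρ(s) = ∫₀^∞ ρ(x)e^{−sx} dx for Re s > 0. Suppose L_ρ is holomorphic on {Re s > 0} and admits an analytic continuation to an open neighborhood of {Re s ≥ 0} that is holomorphic except for a simple pole at s = 0 with residue r. Then lim_{x→+∞} ρ(x) = r. -/

import Mathlib

open MeasureTheory Set Filter

/-- The class `V_bC_g*` of real-valued functions `ρ : [0,∞) → ℝ` of bounded variation on
`[0,∞)`, left-continuous at every point of `[0,∞)`, and vanishing at `0`. -/
def VbCgStar (ρ : ℝ → ℝ) : Prop :=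
  eVariationOn ρ (Set.Ici 0) ≠ ⊤ ∧
    (∀ x : ℝ, 0 ≤ x → ContinuousWithinAt ρ (Set.Iic x) x) ∧ ρ 0 = 0

/-- **Tauberian theorem.** Let `ρ ∈ V_bC_g*` and define the Laplace transform
`L_ρ(s) = ∫₀^∞ ρ(x) e^{-sx} dx` for `Re s > 0`.  Suppose `L_ρ` is holomorphic on `{Re s > 0}`
and admits an analytic continuation `F` to an open neighborhood `U` of `{Re s ≥ 0}`,
holomorphic except for a simple pole at `s = 0` with residue `r` (i.e. `s ↦ s·F(s)` extends to
a holomorphic function `G` on `U` with `G 0 = r`).  Then `lim_{x→+∞} ρ(x) = r`. -/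
theorem stmt9 (ρ : ℝ → ℝ) (hρ : VbCgStar ρ)
    (U : Set ℂ) (hU : IsOpen U) (hUc : {s : ℂ | 0 ≤ s.re} ⊆ U)
    (hL : DifferentiableOn ℂ
      (fun s : ℂ => ∫ x in Set.Ici (0 : ℝ), (ρ x : ℂ) * Complex.exp (-s * x))
      {s : ℂ | 0 < s.re})
    (F G : ℂ → ℂ)
    (hF : DifferentiableOn ℂ F (U \ {0}))
    (hFeq : ∀ s : ℂ, 0 < s.re →
      F s = ∫ x in Set.Ici (0 : ℝ), (ρ x : ℂ) * Complex.exp (-s * x))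
    (hG : DifferentiableOn ℂ G U)
    (hGF : ∀ s ∈ U \ {(0 : ℂ)}, G s = s * F s)
    (r : ℂ) (hres : G 0 = r) :
    Filter.Tendsto (fun x : ℝ => (ρ x : ℂ)) Filter.atTop (nhds r) := by
  obtain ⟨hvar, hlc, h0⟩ := hρ
  have hbv : BoundedVariationOn ρ (Ici 0) := hvar
  have hlbv : LocallyBoundedVariationOn ρ (Ici 0) := hbv.locallyBoundedVariationOn
  set M : ℝ := (eVariationOn ρ (Ici 0)).toReal with hMdef
  have hmax : ∀ x : ℝ, max x 0 ∈ Ici (0 : ℝ) := fun x => le_max_right x 0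
  set σ : ℝ → ℝ := fun x => ρ (max x 0) with hσdef
  have hbound : ∀ x : ℝ, |σ x| ≤ M := by
    intro x
    have h := hbv.dist_le (hmax x) (self_mem_Ici (a := (0:ℝ)))
    simpa [Real.dist_eq, h0] using h
  set V : ℝ → ℝ := fun x => variationOnFromTo ρ (Ici 0) 0 (max x 0) with hVdef
  have hVmono : Monotone V := fun a b hab =>
    variationOnFromTo.monotoneOn hlbv self_mem_Ici (hmax a) (hmax b) (max_le_max hab le_rfl)
  have hWmono : Monotone (fun x => V x - σ x) := by
    intro a b hab
    have h := variationOnFromTo.sub_self_monotoneOn hlbv (self_mem_Ici (a := (0:ℝ)))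
      (hmax a) (hmax b) (max_le_max hab le_rfl)
    simpa [hVdef, hσdef] using h
  have hVle : ∀ x, V x ≤ M := by
    intro x
    rw [hVdef]
    simp only
    rw [variationOnFromTo.eq_of_le ρ (Ici 0) (le_max_right x 0)]
    exact ENNReal.toReal_mono hvar (eVariationOn.mono ρ inter_subset_left)
  have hVlim := tendsto_atTop_ciSup hVmono ⟨M, by rintro y ⟨x, rfl⟩; exact hVle x⟩
  have hWlim := tendsto_atTop_ciSup hWmono ⟨M + M, by
    rintro y ⟨x, rfl⟩
    have h1 := hVle x
    have h2 := (abs_le.mp (hbound x)).1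
    simp only
    linarith⟩
  set L : ℝ := (⨆ x, V x) - ⨆ x, (V x - σ x) with hLdef
  have hσlim : Tendsto σ atTop (nhds L) := by
    have h := hVlim.sub hWlim
    simpa [sub_sub_cancel] using h
  have hρlim : Tendsto ρ atTop (nhds L) := by
    refine hσlim.congr' ?_
    filter_upwards [eventually_ge_atTop (0:ℝ)] with x hx
    simp [hσdef, max_eq_left hx]
  have hσmeas : Measurable σ := by
    have h : σ = fun x => V x - (V x - σ x) := by ext x; ring
    rw [h]
    exact hVmono.measurable.sub hWmono.measurable
  -- the sequence sₙ = 1/(n+1)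
  set c : ℕ → ℂ := fun n => ((((n : ℝ) + 1)⁻¹ : ℝ) : ℂ) with hcdef
  have hposR : ∀ n : ℕ, (0:ℝ) < ((n:ℝ)+1)⁻¹ := fun n => by positivity
  have hcre : ∀ n, 0 < (c n).re := by
    intro n
    simp only [hcdef, Complex.ofReal_re]
    exact hposR n
  have hcU : ∀ n, c n ∈ U \ {(0:ℂ)} := by
    intro n
    refine ⟨hUc (le_of_lt (hcre n)), ?_⟩
    simp only [mem_singleton_iff]
    exact Complex.ofReal_ne_zero.mpr (ne_of_gt (hposR n))
  have h0U : (0:ℂ) ∈ U := hUc (by simp)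
  have hGcont : ContinuousAt G 0 := (hG.differentiableAt (hU.mem_nhds h0U)).continuousAt
  have hGr : Tendsto (fun n => G (c n)) atTop (nhds r) := by
    have hc0 : Tendsto c atTop (nhds 0) := by
      have h1 := tendsto_one_div_add_atTop_nhds_zero_nat (𝕜 := ℝ)
      have h2 := (Complex.continuous_ofReal.tendsto 0).comp h1
      simpa [hcdef, Function.comp_def, one_div] using h2
    have := hGcont.tendsto.comp hc0
    rw [hres] at this
    exact this
  -- key identity
  have key : ∀ n : ℕ, G (c n)
      = ∫ u in Ioi (0:ℝ), (σ (((n:ℝ)+1) * u) : ℂ) * Complex.exp (-(u:ℂ)) := by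
    intro n
    have hne : ((n:ℝ)+1) ≠ 0 := by positivity
    rw [hGF _ (hcU n), hFeq _ (hcre n), integral_Ici_eq_integral_Ioi]
    have h2 : (∫ x in Ioi (0:ℝ), (ρ x : ℂ) * Complex.exp (-c n * x))
        = ∫ x in Ioi (0:ℝ), (σ x : ℂ) * Complex.exp (-c n * x) := by
      refine setIntegral_congr_fun measurableSet_Ioi fun x hx => ?_
      simp [hσdef, max_eq_left (le_of_lt (mem_Ioi.mp hx))]
    rw [h2]
    have h3 := integral_comp_mul_left_Ioi
      (fun x : ℝ => (σ x : ℂ) * Complex.exp (-c n * x)) 0 (b := (n:ℝ)+1) (by positivity)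
    rw [mul_zero] at h3
    have h4 : ∀ x : ℝ, -c n * ((((n:ℝ)+1) * x : ℝ) : ℂ) = -(x:ℂ) := by
      intro x
      have hneC : ((n:ℂ)+1) ≠ 0 := by exact_mod_cast hne
      rw [hcdef]
      push_cast
      rw [neg_mul, inv_mul_cancel_left₀ hneC]
    have h5 : (∫ x in Ioi (0:ℝ), (σ (((n:ℝ)+1) * x) : ℂ)
        * Complex.exp (-c n * ((((n:ℝ)+1) * x : ℝ) : ℂ)))
        = ∫ x in Ioi (0:ℝ), (σ (((n:ℝ)+1) * x) : ℂ) * Complex.exp (-(x:ℂ)) := by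
      simp only [h4]
    rw [← h5, h3, hcdef, Complex.real_smul]
  -- dominated convergence
  have hDCT : Tendsto (fun n : ℕ => ∫ u in Ioi (0:ℝ),
      (σ (((n:ℝ)+1) * u) : ℂ) * Complex.exp (-(u:ℂ))) atTop
      (nhds (∫ u in Ioi (0:ℝ), (L : ℂ) * Complex.exp (-(u:ℂ)))) := by
    refine tendsto_integral_of_dominated_convergence (fun u => M * Real.exp (-u))
      ?_ ?_ ?_ ?_
    · intro n
      have m1 : Measurable fun u : ℝ => (σ (((n:ℝ)+1) * u) : ℂ) :=
        Complex.measurable_ofReal.comp (hσmeas.comp (measurable_id.const_mul _))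
      have m2 : Continuous fun u : ℝ => Complex.exp (-(u:ℂ)) :=
        Complex.continuous_exp.comp Complex.continuous_ofReal.neg
      exact (m1.mul m2.measurable).aestronglyMeasurable
    · have h := exp_neg_integrableOn_Ioi 0 (one_pos (α := ℝ))
      simp only [neg_one_mul] at h
      exact h.const_mul M
    · intro n
      refine ae_of_all _ fun u => ?_
      rw [norm_mul]
      have h1 : ‖(σ (((n:ℝ)+1) * u) : ℂ)‖ = |σ (((n:ℝ)+1) * u)| := by
        rw [Complex.norm_real, Real.norm_eq_abs]
      have h2 : ‖Complex.exp (-(u:ℂ))‖ = Real.exp (-u) := by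
        rw [Complex.norm_exp]
        simp
      rw [h1, h2]
      exact mul_le_mul_of_nonneg_right (hbound _) (Real.exp_nonneg _)
    · rw [ae_restrict_iff' measurableSet_Ioi]
      refine ae_of_all _ fun u hu => ?_
      have h1 : Tendsto (fun n : ℕ => ((n:ℝ)+1) * u) atTop atTop := by
        refine Tendsto.atTop_mul_const hu ?_
        exact tendsto_atTop_add_const_right atTop 1 tendsto_natCast_atTop_atTop
      have h2 : Tendsto (fun n : ℕ => σ (((n:ℝ)+1) * u)) atTop (nhds L) := hσlim.comp h1
      exact ((Complex.continuous_ofReal.tendsto L).comp h2).mul_const _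
  have hval : (∫ u in Ioi (0:ℝ), (L : ℂ) * Complex.exp (-(u:ℂ))) = (L : ℂ) := by
    rw [integral_const_mul]
    have h : ∀ u : ℝ, Complex.exp (-(u:ℂ)) = ((Real.exp (-u) : ℝ) : ℂ) := by
      intro u; rw [← Complex.ofReal_neg, Complex.ofReal_exp]
    simp only [h]
    have h2 : (∫ (a : ℝ) in Ioi 0, ((Real.exp (-a) : ℝ) : ℂ))
        = ((∫ (a : ℝ) in Ioi 0, Real.exp (-a) : ℝ) : ℂ) := integral_ofReal
    rw [h2, integral_exp_neg_Ioi_zero]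
    simp
  have hGL : Tendsto (fun n => G (c n)) atTop (nhds (L:ℂ)) := by
    rw [← hval]
    simpa only [key] using hDCT
  have hLr : (L : ℂ) = r := tendsto_nhds_unique hGL hGr
  rw [← hLr]
  exact (Complex.continuous_ofReal.tendsto L).comp hρlim
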